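/- Every tensor X ∈ ℝ^{I1×I2×I3} admits a T-SVD: there exist t-orthogonal tensors U ∈ ℝ^{I1×I1×I3} and V ∈ ℝ^{I2×I2×I3} and an f-diagonal tensor S ∈ ℝ^{I1×I2×I3} (each frontal slice of the mode-3 DFT of S is diagonal) such that X = U * S * V^T. -/

import Mathlib

open scoped BigOperators

namespace TTT

/-- Circular convolution of two length-`T` vectors. -/
def cconv {T : ℕ} (x y : Fin T → ℝ) : Fin T → ℝ := fun k => ∑ m, x m * y (k - m)

/-- The t-product, defined tube-wise via circular convolution. -/
def tprod {I1 I2 I4 T : ℕ} (X : Fin I1 → Fin I2 → Fin T → ℝ)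
    (Y : Fin I2 → Fin I4 → Fin T → ℝ) : Fin I1 → Fin I4 → Fin T → ℝ :=
  fun i k => ∑ j, cconv (X i j) (Y j k)

/-- t-product transpose. -/
def ttrans {I1 I2 T : ℕ} (X : Fin I1 → Fin I2 → Fin T → ℝ) :
    Fin I2 → Fin I1 → Fin T → ℝ :=
  fun j i t => X i j (-t)

/-- The identity tensor. -/
def tId {n T : ℕ} : Fin n → Fin n → Fin T → ℝ :=
  fun i j t => if i = j ∧ (t : ℕ) = 0 then 1 else 0

/-- A tensor is t-orthogonal if `Qᵀ*Q = Q*Qᵀ = I`. -/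
def tOrthogonal {n T : ℕ} (Q : Fin n → Fin n → Fin T → ℝ) : Prop :=
  tprod (ttrans Q) Q = tId ∧ tprod Q (ttrans Q) = tId

/-- Unnormalized discrete Fourier transform of a length-`T` real vector. -/
noncomputable def dftR {T : ℕ} (x : Fin T → ℝ) (k : Fin T) : ℂ :=
  ∑ m, (x m : ℂ) * Complex.exp (-2 * (Real.pi : ℂ) * Complex.I * ((k : ℕ) : ℂ) * ((m : ℕ) : ℂ) / ((T : ℕ) : ℂ))

/-- A tensor is f-diagonal if every frontal slice of its mode-3 DFT is diagonal. -/
def fDiagonal {I1 I2 T : ℕ} (S : Fin I1 → Fin I2 → Fin T → ℝ) : Prop :=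
  ∀ (t : Fin T) (i : Fin I1) (j : Fin I2), (i : ℕ) ≠ (j : ℕ) → dftR (S i j) t = 0

section Aux

open Matrix Finset
open scoped ComplexConjugate ComplexOrder

set_option linter.unusedSectionVars false

theorem exists_perm_lt_iff {n : ℕ} (p : Fin n → Prop) [DecidablePred p] :
    ∃ τ : Equiv.Perm (Fin n), ∀ j, p (τ j) ↔ (j : ℕ) < Fintype.card {j // p j} := by
  classical
  set r := Fintype.card {j // p j} with hr
  set r' := Fintype.card {j // ¬ p j} with hr'
  have hcard : r + r' = n := by
    rw [hr, hr', ← Fintype.card_sum]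
    simpa using Fintype.card_congr (Equiv.sumCompl p)
  refine ⟨((finCongr hcard.symm).trans (finSumFinEquiv.symm)).trans
    ((Equiv.sumCongr (Fintype.equivFin {j // p j}).symm (Fintype.equivFin {j // ¬ p j}).symm).trans
      (Equiv.sumCompl p)), fun j => ?_⟩
  rcases hs : finSumFinEquiv.symm (finCongr hcard.symm j) with a | b
  · have hj : finCongr hcard.symm j = finSumFinEquiv (Sum.inl a) := by rw [← hs]; simp
    have hval : (j : ℕ) = (a : ℕ) := by
      have := congrArg Fin.val hj
      simpa using this
    simp only [Equiv.trans_apply, hs, Equiv.sumCongr_apply, Sum.map_inl,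
      Equiv.sumCompl_apply_inl]
    constructor
    · intro _; rw [hval]; exact a.2
    · intro _; exact ((Fintype.equivFin {j // p j}).symm a).2
  · have hj : finCongr hcard.symm j = finSumFinEquiv (Sum.inr b) := by rw [← hs]; simp
    have hval : (j : ℕ) = r + (b : ℕ) := by
      have := congrArg Fin.val hj
      simpa using this
    simp only [Equiv.trans_apply, hs, Equiv.sumCongr_apply, Sum.map_inr,
      Equiv.sumCompl_apply_inr]
    constructor
    · intro h; exact absurd h ((Fintype.equivFin {j // ¬ p j}).symm b).2
    · intro h; omega


theorem svd_exists {𝕜 : Type*} [RCLike 𝕜] {m n : ℕ} (A : Matrix (Fin m) (Fin n) 𝕜) :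
    ∃ (U : Matrix (Fin m) (Fin m) 𝕜) (S : Matrix (Fin m) (Fin n) 𝕜)
      (V : Matrix (Fin n) (Fin n) 𝕜),
      Uᴴ * U = 1 ∧ U * Uᴴ = 1 ∧ Vᴴ * V = 1 ∧ V * Vᴴ = 1 ∧
      (∀ (i : Fin m) (j : Fin n), (i : ℕ) ≠ (j : ℕ) → S i j = 0) ∧ A = U * S * Vᴴ := by
  classical
  have hinner : ∀ (N : ℕ) (x y : EuclideanSpace 𝕜 (Fin N)),
      (inner 𝕜 x y : 𝕜) = ∑ i, (starRingEnd 𝕜) (x i) * y i := by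
    intro N x y
    rw [PiLp.inner_apply]
    simp [RCLike.inner_apply, mul_comm]
  have hB : (Aᴴ * A).IsHermitian := Matrix.isHermitian_conjTranspose_mul_self A
  have hPSD : (Aᴴ * A).PosSemidef := Matrix.posSemidef_conjTranspose_mul_self A
  obtain ⟨τ, hτ⟩ := exists_perm_lt_iff (fun j => hB.eigenvalues j ≠ 0)
  set r := Fintype.card {j // hB.eigenvalues j ≠ 0} with hrdef
  have hrn : r ≤ n := by
    rw [hrdef]
    have := Fintype.card_subtype_le (fun j : Fin n => hB.eigenvalues j ≠ 0)
    simpa using this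
  set d : Fin n → ℝ := fun j => hB.eigenvalues (τ j) with hd
  set v : Fin n → EuclideanSpace 𝕜 (Fin n) := fun j => hB.eigenvectorBasis (τ j) with hv
  have hvon : Orthonormal 𝕜 v := hB.eigenvectorBasis.orthonormal.comp τ τ.injective
  have hdnn : ∀ j, 0 ≤ d j := fun j => hPSD.eigenvalues_nonneg _
  set w : Fin n → EuclideanSpace 𝕜 (Fin m) := fun j => WithLp.toLp 2 (A *ᵥ v j : Fin m → 𝕜) with hw
  have hBv : ∀ (l : Fin n) (a : Fin n), ∑ b, (Aᴴ * A) a b * v l b = (d l : 𝕜) * v l a := by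
    intro l a
    have h := congrFun (hB.mulVec_eigenvectorBasis (τ l)) a
    have h2 : ((Aᴴ * A) *ᵥ (v l : Fin n → 𝕜)) a
        = (hB.eigenvalues (τ l) • (v l : Fin n → 𝕜)) a := h
    rw [Matrix.mulVec, dotProduct] at h2
    rw [h2]
    simp [RCLike.real_smul_eq_coe_mul, hd]
  have hww : ∀ j l, (inner 𝕜 (w j) (w l) : 𝕜) = if j = l then (d l : 𝕜) else 0 := by
    intro j l
    have e1 : (inner 𝕜 (w j) (w l) : 𝕜)
        = ∑ i, ∑ a, ∑ b, ((starRingEnd 𝕜) (A i a) * (starRingEnd 𝕜) (v j a))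
            * (A i b * v l b) := by
      rw [hinner]
      refine Finset.sum_congr rfl fun i _ => ?_
      have hwj : w j i = ∑ a, A i a * v j a := rfl
      have hwl : w l i = ∑ b, A i b * v l b := rfl
      rw [hwj, hwl, map_sum, Finset.sum_mul_sum]
      refine Finset.sum_congr rfl fun a _ => Finset.sum_congr rfl fun b _ => ?_
      rw [_root_.map_mul (starRingEnd 𝕜) (A i a) (v j a)]
    rw [e1, Finset.sum_comm]
    have e2 : ∀ a : Fin n, (∑ i, ∑ b, ((starRingEnd 𝕜) (A i a) * (starRingEnd 𝕜) (v j a))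
        * (A i b * v l b)) = (starRingEnd 𝕜) (v j a) * ((d l : 𝕜) * v l a) := by
      intro a
      rw [← hBv l a, Finset.mul_sum, Finset.sum_comm]
      refine Finset.sum_congr rfl fun b _ => ?_
      rw [Matrix.mul_apply]
      simp only [Matrix.conjTranspose_apply, RCLike.star_def, Finset.sum_mul, Finset.mul_sum]
      refine Finset.sum_congr rfl fun i _ => ?_
      ring
    rw [Finset.sum_congr rfl (fun a _ => e2 a)]
    have e3 : ∑ a, (starRingEnd 𝕜) (v j a) * ((d l : 𝕜) * v l a)
        = (d l : 𝕜) * (inner 𝕜 (v j) (v l) : 𝕜) := by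
      rw [hinner, Finset.mul_sum]
      refine Finset.sum_congr rfl fun a _ => by ring
    rw [e3, orthonormal_iff_ite.mp hvon j l]
    by_cases hjl : j = l <;> simp [hjl]
  have hw0 : ∀ j, d j = 0 → w j = 0 := by
    intro j hj
    refine inner_self_eq_zero (𝕜 := 𝕜).mp ?_
    rw [hww j j, if_pos rfl, hj]
    simp
  set u : Fin n → EuclideanSpace 𝕜 (Fin m) :=
    fun j => (((Real.sqrt (d j) : ℝ) : 𝕜))⁻¹ • w j with hu
  have hsq : ∀ j, d j ≠ 0 → Real.sqrt (d j) ≠ 0 := fun j hj =>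
    Real.sqrt_ne_zero'.mpr (lt_of_le_of_ne (hdnn j) (Ne.symm hj))
  have huu : ∀ j l, d j ≠ 0 → d l ≠ 0 →
      (inner 𝕜 (u j) (u l) : 𝕜) = if j = l then 1 else 0 := by
    intro j l hj hl
    rw [hu]
    simp only [inner_smul_left, inner_smul_right, map_inv₀, RCLike.conj_ofReal, hww j l]
    by_cases hjl : j = l
    · subst hjl
      rw [if_pos rfl, if_pos rfl]
      rw [show (1 : 𝕜) = ((1 : ℝ) : 𝕜) from (RCLike.ofReal_one).symm]
      simp only [← RCLike.ofReal_inv, ← RCLike.ofReal_mul]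
      rw [RCLike.ofReal_inj]
      have hms : Real.sqrt (d j) * Real.sqrt (d j) = d j := Real.mul_self_sqrt (hdnn j)
      rw [← hms]
      field_simp
      rw [Real.sqrt_sq (Real.sqrt_nonneg _)]
      exact div_self (pow_ne_zero 2 (hsq j hj))
    · simp [hjl]
  have hrm : r ≤ m := by
    have hlin : LinearIndependent 𝕜 (fun j : {j // d j ≠ 0} => u j) := by
      refine Orthonormal.linearIndependent ?_
      rw [orthonormal_iff_ite]
      intro i i'
      rw [huu _ _ i.2 i'.2]
      simp [Subtype.ext_iff]
    have hcle := hlin.fintype_card_le_finrank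
    rw [finrank_euclideanSpace_fin] at hcle
    refine le_trans (le_of_eq ?_) hcle
    rw [hrdef]
    refine Fintype.card_congr ?_
    exact (Equiv.subtypeEquiv τ (fun a => by simp [hd])).symm
  set g : Fin m → EuclideanSpace 𝕜 (Fin m) :=
    fun i => if h : (i : ℕ) < r then u ⟨(i : ℕ), lt_of_lt_of_le h hrn⟩ else 0 with hg
  have hdne : ∀ j : Fin n, (j : ℕ) < r → d j ≠ 0 := by
    intro j hj
    have := (hτ j).mpr hj
    simpa [hd] using this
  have hgon : Orthonormal 𝕜 (({i : Fin m | (i : ℕ) < r}).restrict g) := by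
    rw [orthonormal_iff_ite]
    rintro ⟨i, hi⟩ ⟨i', hi'⟩
    simp only [Set.mem_setOf_eq] at hi hi'
    show inner 𝕜 (g i) (g i') = _
    simp only [Set.restrict_apply, hg]
    rw [dif_pos hi, dif_pos hi']
    rw [huu _ _ (hdne _ hi) (hdne _ hi')]
    have hiff : (⟨(i : ℕ), lt_of_lt_of_le hi hrn⟩ : Fin n) = ⟨(i' : ℕ), lt_of_lt_of_le hi' hrn⟩
        ↔ (⟨i, hi⟩ : {i : Fin m | (i : ℕ) < r}) = ⟨i', hi'⟩ := by
      simp [Fin.ext_iff, Subtype.ext_iff]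
    by_cases hii : (⟨i, hi⟩ : {i : Fin m | (i : ℕ) < r}) = ⟨i', hi'⟩
    · rw [if_pos (hiff.mpr hii), if_pos hii]
    · rw [if_neg (fun h => hii (hiff.mp h)), if_neg hii]
  obtain ⟨b, hb⟩ := hgon.exists_orthonormalBasis_extension_of_card_eq
    (by simp [finrank_euclideanSpace_fin])
  set U : Matrix (Fin m) (Fin m) 𝕜 := Matrix.of fun i l => b l i with hU
  set V : Matrix (Fin n) (Fin n) 𝕜 := Matrix.of fun a j => v j a with hV
  have hUU : Uᴴ * U = 1 := by
    ext l l'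
    rw [Matrix.mul_apply, Matrix.one_apply]
    calc ∑ i, Uᴴ l i * U i l' = ∑ i, (starRingEnd 𝕜) (b l i) * b l' i := by
          refine Finset.sum_congr rfl fun i _ => ?_
          simp [hU, Matrix.conjTranspose_apply, RCLike.star_def]
      _ = (inner 𝕜 (b l) (b l') : 𝕜) := (hinner _ _ _).symm
      _ = if l = l' then 1 else 0 := orthonormal_iff_ite.mp b.orthonormal l l'
  have hVV : Vᴴ * V = 1 := by
    ext j j'
    rw [Matrix.mul_apply, Matrix.one_apply]
    calc ∑ a, Vᴴ j a * V a j' = ∑ a, (starRingEnd 𝕜) (v j a) * v j' a := by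
          refine Finset.sum_congr rfl fun a _ => ?_
          simp [hV, Matrix.conjTranspose_apply, RCLike.star_def]
      _ = (inner 𝕜 (v j) (v j') : 𝕜) := (hinner _ _ _).symm
      _ = if j = j' then 1 else 0 := orthonormal_iff_ite.mp hvon j j'
  refine ⟨U, Uᴴ * A * V, V, hUU, mul_eq_one_comm.mp hUU, hVV,
    mul_eq_one_comm.mp hVV, ?_, ?_⟩
  · intro i j hij
    have hS : (Uᴴ * A * V) i j = (inner 𝕜 (b i) (w j) : 𝕜) := by
      rw [hinner, Matrix.mul_assoc, Matrix.mul_apply]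
      refine Finset.sum_congr rfl fun k _ => ?_
      have h1 : Uᴴ i k = (starRingEnd 𝕜) (b i k) := by
        simp [hU, Matrix.conjTranspose_apply, RCLike.star_def]
      have h2 : (A * V) k j = w j k := by
        rw [Matrix.mul_apply]
        have h3 : w j k = ∑ a, A k a * v j a := rfl
        rw [h3]
        exact Finset.sum_congr rfl fun a _ => by simp [hV]
      rw [h1, h2]
    by_cases hdj : d j = 0
    · rw [hS, hw0 j hdj, inner_zero_right]
    · have hjr : (j : ℕ) < r := (hτ j).mp (by simpa [hd] using hdj)
      have hjm : (j : ℕ) < m := lt_of_lt_of_le hjr hrm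
      have hwu : w j = ((Real.sqrt (d j) : ℝ) : 𝕜) • u j := by
        rw [hu, smul_smul]
        rw [mul_inv_cancel₀ (by exact_mod_cast (RCLike.ofReal_ne_zero.mpr (hsq j hdj)))]
        rw [one_smul]
      have hbu : b ⟨(j : ℕ), hjm⟩ = u j := by
        rw [hb ⟨(j : ℕ), hjm⟩ (by simp only [Set.mem_setOf_eq]; exact hjr)]
        simp only [hg]
        rw [dif_pos (show ((⟨(j : ℕ), hjm⟩ : Fin m) : ℕ) < r from hjr)]
      rw [hS, hwu, ← hbu, inner_smul_right]
      rw [orthonormal_iff_ite.mp b.orthonormal i ⟨(j : ℕ), hjm⟩]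
      rw [if_neg (by simp only [Fin.ext_iff]; exact hij)]
      simp
  · have h1 : U * (Uᴴ * A * V) * Vᴴ = (U * Uᴴ) * A * (V * Vᴴ) := by
      simp only [Matrix.mul_assoc]
    rw [h1, mul_eq_one_comm.mp hUU, mul_eq_one_comm.mp hVV,
      Matrix.one_mul, Matrix.mul_one]

/-! ### auxiliary exponential -/

noncomputable def eT (T : ℕ) (z : ℤ) : ℂ :=
  Complex.exp (((z : ℂ) / (T : ℂ)) * (2 * (Real.pi : ℂ) * Complex.I))

lemma eT_add (T : ℕ) (a b : ℤ) : eT T (a + b) = eT T a * eT T b := by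
  rw [eT, eT, eT, ← Complex.exp_add]
  congr 1
  push_cast
  ring

lemma eT_zero (T : ℕ) : eT T 0 = 1 := by
  simp [eT]

lemma eT_dvd (T : ℕ) {z : ℤ} (h : (T : ℤ) ∣ z) : eT T z = 1 := by
  rcases eq_or_ne T 0 with hT | hT
  · subst hT
    simp only [Nat.cast_zero, zero_dvd_iff] at h
    subst h; exact eT_zero 0
  · obtain ⟨c, rfl⟩ := h
    have hTc : ((T : ℕ) : ℂ) ≠ 0 := by exact_mod_cast hT
    rw [eT]
    rw [show ((((T : ℤ) * c : ℤ) : ℂ) / (T : ℂ)) = (c : ℂ) by push_cast; field_simp]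
    exact Complex.exp_int_mul_two_pi_mul_I c

lemma eT_congr (T : ℕ) {a b : ℤ} (h : (T : ℤ) ∣ (a - b)) : eT T a = eT T b := by
  have : eT T a = eT T (b + (a - b)) := by norm_num
  rw [this, eT_add, eT_dvd T h, mul_one]

lemma eT_conj (T : ℕ) (z : ℤ) : conj (eT T z) = eT T (-z) := by
  rw [eT, eT, ← Complex.exp_conj]
  congr 1
  simp only [_root_.map_mul, map_div₀, Complex.conj_I, map_intCast, map_natCast, map_ofNat,
    Complex.conj_ofReal]
  push_cast
  ring

lemma eT_pow (T : ℕ) (z : ℤ) (k : ℕ) : eT T (z * k) = (eT T z) ^ k := by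
  rw [eT, eT, ← Complex.exp_nat_mul]
  congr 1
  push_cast
  ring

lemma eT_ne_one (T : ℕ) [NeZero T] {z : ℤ} (h : ¬ (T : ℤ) ∣ z) : eT T z ≠ 1 := by
  intro hone
  rw [eT, Complex.exp_eq_one_iff] at hone
  obtain ⟨n, hn⟩ := hone
  have h2 : ((z : ℂ) / (T : ℂ)) = (n : ℂ) :=
    mul_right_cancel₀ Complex.two_pi_I_ne_zero hn
  have hT : ((T : ℕ) : ℂ) ≠ 0 := by exact_mod_cast (NeZero.ne T)
  have h3 : (z : ℂ) = (n : ℂ) * (T : ℂ) := by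
    field_simp at h2
    linear_combination h2
  have h4 : z = n * (T : ℤ) := by exact_mod_cast h3
  exact h ⟨n, by rw [h4, mul_comm]⟩

lemma sum_eT (T : ℕ) [NeZero T] (z : ℤ) :
    ∑ m : Fin T, eT T (z * (m : ℕ)) = if (T : ℤ) ∣ z then (T : ℂ) else 0 := by
  by_cases h : (T : ℤ) ∣ z
  · rw [if_pos h]
    have : ∀ m : Fin T, eT T (z * (m : ℕ)) = 1 := fun m =>
      eT_dvd T (Dvd.dvd.mul_right h _)
    simp [this]
  · rw [if_neg h]
    have hz := eT_ne_one T h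
    calc ∑ m : Fin T, eT T (z * (m : ℕ)) = ∑ m : Fin T, (eT T z) ^ ((m : Fin T) : ℕ) := by
          exact Finset.sum_congr rfl fun m _ => eT_pow T z m
      _ = ∑ i ∈ Finset.range T, (eT T z) ^ i := Fin.sum_univ_eq_sum_range _ T
      _ = ((eT T z) ^ T - 1) / (eT T z - 1) := geom_sum_eq hz T
      _ = 0 := by
          rw [show (eT T z) ^ T = eT T (z * (T : ℕ)) from (eT_pow T z T).symm]
          rw [eT_dvd T ⟨z, by ring⟩]
          simp

/-! ### dftR basics -/

lemma dftR_eq {T : ℕ} (x : Fin T → ℝ) (k : Fin T) :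
    dftR x k = ∑ m, (x m : ℂ) * eT T (-((k : ℕ) * (m : ℕ) : ℤ)) := by
  refine Finset.sum_congr rfl fun m _ => ?_
  congr 1
  rw [eT]
  congr 1
  push_cast
  ring

lemma eT_shift {T : ℕ} {a z : ℤ} (h : (T : ℤ) ∣ (a - z)) (c : ℤ) :
    eT T (c * a) = eT T (c * z) := by
  refine eT_congr T ?_
  have h2 : (T : ℤ) ∣ c * (a - z) := Dvd.dvd.mul_left h c
  have h3 : c * (a - z) = c * a - c * z := by ring
  rwa [h3] at h2

lemma fin_neg_dvd {T : ℕ} [NeZero T] (a : Fin T) :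
    (T : ℤ) ∣ ((((-a : Fin T) : ℕ) : ℤ) - (-((a : ℕ) : ℤ))) := by
  rw [Fin.neg_def]
  simp only [Fin.val_mk]
  have ha : (a : ℕ) ≤ T := le_of_lt a.2
  have hc : (((T - (a : ℕ)) % T : ℕ) : ℤ) = ((T : ℤ) - ((a : ℕ) : ℤ)) % (T : ℤ) := by
    push_cast [Nat.cast_sub ha]
    ring_nf
  rw [hc, Int.emod_def]
  exact ⟨1 - (((T : ℤ) - ((a : ℕ) : ℤ)) / T), by ring⟩

lemma fin_add_dvd {T : ℕ} [NeZero T] (a b : Fin T) :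
    (T : ℤ) ∣ ((((a + b : Fin T) : ℕ) : ℤ) - (((a : ℕ) : ℤ) + ((b : ℕ) : ℤ))) := by
  rw [Fin.add_def]
  simp only [Fin.val_mk]
  have hc : ((((a : ℕ) + (b : ℕ)) % T : ℕ) : ℤ)
      = (((a : ℕ) : ℤ) + ((b : ℕ) : ℤ)) % (T : ℤ) := by push_cast; ring_nf
  rw [hc, Int.emod_def]
  exact ⟨-((((a : ℕ) : ℤ) + ((b : ℕ) : ℤ)) / T), by ring⟩

lemma fin_sub_dvd {T : ℕ} [NeZero T] (a b : Fin T) :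
    (T : ℤ) ∣ ((((a - b : Fin T) : ℕ) : ℤ) - (((a : ℕ) : ℤ) - ((b : ℕ) : ℤ))) := by
  rw [Fin.sub_def]
  simp only [Fin.val_mk]
  have hb : (b : ℕ) ≤ T := le_of_lt b.2
  have hc : (((T - (b : ℕ) + (a : ℕ)) % T : ℕ) : ℤ)
      = ((T : ℤ) - ((b : ℕ) : ℤ) + ((a : ℕ) : ℤ)) % (T : ℤ) := by
    push_cast [Nat.cast_sub hb]
    ring_nf
  rw [hc, Int.emod_def]
  exact ⟨1 - (((T : ℤ) - ((b : ℕ) : ℤ) + ((a : ℕ) : ℤ)) / T), by ring⟩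

section Main

variable {T : ℕ} [NeZero T]

lemma dftR_cconv (x y : Fin T → ℝ) (k : Fin T) :
    dftR (cconv x y) k = dftR x k * dftR y k := by
  rw [dftR_eq, dftR_eq, dftR_eq, Finset.sum_mul_sum]
  have e1 : ∀ t : Fin T, ((cconv x y t : ℝ) : ℂ) * eT T (-((k : ℕ) * (t : ℕ) : ℤ))
      = ∑ m : Fin T, ((x m : ℝ) : ℂ) * ((y (t - m) : ℝ) : ℂ)
          * eT T (-((k : ℕ) * (t : ℕ) : ℤ)) := by
    intro t
    rw [cconv]
    push_cast
    rw [Finset.sum_mul]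
  rw [Finset.sum_congr rfl fun t _ => e1 t, Finset.sum_comm]
  refine Finset.sum_congr rfl fun m _ => ?_
  refine Fintype.sum_equiv (Equiv.subRight m) _ _ fun t => ?_
  simp only [Equiv.subRight_apply]
  have hB : eT T (-((k : ℕ) * (((t - m : Fin T)) : ℕ) : ℤ))
      = eT T ((-((k : ℕ) : ℤ)) * (((t : ℕ) : ℤ) - ((m : ℕ) : ℤ))) := by
    rw [show (-((k : ℕ) * (((t - m : Fin T)) : ℕ) : ℤ))
        = (-((k : ℕ) : ℤ)) * ((((t - m : Fin T)) : ℕ) : ℤ) by ring]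
    exact eT_shift (fin_sub_dvd t m) _
  have hA : eT T (-((k : ℕ) * (m : ℕ) : ℤ))
      * eT T ((-((k : ℕ) : ℤ)) * (((t : ℕ) : ℤ) - ((m : ℕ) : ℤ)))
      = eT T (-((k : ℕ) * (t : ℕ) : ℤ)) := by
    rw [← eT_add]
    congr 1
    ring
  rw [hB, ← hA]
  ring

lemma dftR_neg (x : Fin T → ℝ) (k : Fin T) :
    dftR (fun t => x (-t)) k = conj (dftR x k) := by
  rw [dftR_eq, dftR_eq, map_sum]
  refine Fintype.sum_equiv (Equiv.neg (Fin T)) _ _ fun s => ?_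
  simp only [Equiv.neg_apply, neg_neg, _root_.map_mul, Complex.conj_ofReal, eT_conj]
  congr 1
  have h2 : eT T (((k : ℕ) : ℤ) * (((-s : Fin T) : ℕ) : ℤ))
      = eT T (((k : ℕ) : ℤ) * (-((s : ℕ) : ℤ))) := eT_shift (fin_neg_dvd s) _
  rw [show (((k : ℕ) : ℤ) * (((-s : Fin T) : ℕ) : ℤ)) = ((k : ℕ) * ((-s : Fin T) : ℕ) : ℤ)
    by ring] at h2
  rw [h2]
  congr 1
  ring

lemma dftR_dft_neg (x : Fin T → ℝ) (k : Fin T) :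
    dftR x (-k) = conj (dftR x k) := by
  rw [dftR_eq, dftR_eq, map_sum]
  refine Finset.sum_congr rfl fun m _ => ?_
  simp only [_root_.map_mul, Complex.conj_ofReal, eT_conj]
  congr 1
  have h2 : eT T ((-((m : ℕ) : ℤ)) * (((-k : Fin T) : ℕ) : ℤ))
      = eT T ((-((m : ℕ) : ℤ)) * (-((k : ℕ) : ℤ))) := eT_shift (fin_neg_dvd k) _
  rw [show (-(((-k : Fin T) : ℕ) * (m : ℕ) : ℤ))
      = (-((m : ℕ) : ℤ)) * (((-k : Fin T) : ℕ) : ℤ) by ring]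
  rw [h2]
  congr 1
  ring

lemma dftR_tId {n : ℕ} (i j : Fin n) (k : Fin T) :
    dftR (tId i j) k = if i = j then 1 else 0 := by
  rw [dftR_eq]
  by_cases hij : i = j
  · rw [if_pos hij]
    rw [Finset.sum_eq_single (0 : Fin T)]
    · simp [tId, hij, eT_zero]
    · intro t _ ht
      have : ¬ ((t : ℕ) = 0) := fun h => ht (Fin.ext h)
      simp [tId, this]
    · intro h
      exact absurd (Finset.mem_univ _) h
  · rw [if_neg hij]
    refine Finset.sum_eq_zero fun t _ => ?_
    simp [tId, hij]

lemma dftR_sum {ι : Type*} (s : Finset ι) (f : ι → Fin T → ℝ) (k : Fin T) :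
    dftR (fun t => ∑ j ∈ s, f j t) k = ∑ j ∈ s, dftR (f j) k := by
  rw [dftR_eq]
  have e1 : ∀ m : Fin T, ((∑ j ∈ s, f j m : ℝ) : ℂ) * eT T (-((k : ℕ) * (m : ℕ) : ℤ))
      = ∑ j ∈ s, ((f j m : ℝ) : ℂ) * eT T (-((k : ℕ) * (m : ℕ) : ℤ)) := by
    intro m
    push_cast
    rw [Finset.sum_mul]
  rw [Finset.sum_congr rfl fun m _ => e1 m, Finset.sum_comm]
  exact Finset.sum_congr rfl fun j _ => (dftR_eq _ _).symm

lemma fin_dvd_iff_eq {T : ℕ} [NeZero T] (l k : Fin T) :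
    (T : ℤ) ∣ (((l : ℕ) : ℤ) - ((k : ℕ) : ℤ)) ↔ l = k := by
  constructor
  · intro hdvd
    have h1 : |(((l : ℕ) : ℤ) - ((k : ℕ) : ℤ))| < (T : ℤ) := by
      have := l.2
      have := k.2
      rw [abs_lt]
      omega
    have := Int.eq_zero_of_abs_lt_dvd hdvd h1
    have : (l : ℕ) = (k : ℕ) := by omega
    exact Fin.ext this
  · rintro rfl
    simp

lemma dft_inversion (g : Fin T → ℂ) (hg : ∀ k : Fin T, g (-k) = conj (g k)) (k : Fin T) :
    dftR (fun t => ((T : ℂ)⁻¹ * ∑ l, g l * eT T ((l : ℕ) * (t : ℕ))).re) k = g k := by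
  have hreal : ∀ t : Fin T,
      ((((T : ℂ)⁻¹ * ∑ l, g l * eT T ((l : ℕ) * (t : ℕ))).re : ℝ) : ℂ)
        = (T : ℂ)⁻¹ * ∑ l, g l * eT T ((l : ℕ) * (t : ℕ)) := by
    intro t
    refine Complex.conj_eq_iff_re.mp ?_
    rw [_root_.map_mul, map_inv₀, map_natCast, map_sum]
    congr 1
    refine Fintype.sum_equiv (Equiv.neg (Fin T)) _ _ fun l => ?_
    simp only [Equiv.neg_apply]
    rw [_root_.map_mul, ← hg l, eT_conj]
    congr 1
    have h2 : eT T (((t : ℕ) : ℤ) * (((-l : Fin T) : ℕ) : ℤ))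
        = eT T (((t : ℕ) : ℤ) * (-((l : ℕ) : ℤ))) := eT_shift (fin_neg_dvd l) _
    rw [show ((((-l : Fin T) : ℕ) * (t : ℕ)) : ℤ)
        = (((t : ℕ) : ℤ) * (((-l : Fin T) : ℕ) : ℤ)) by ring]
    rw [h2]
    congr 1
    ring
  rw [dftR_eq]
  rw [Finset.sum_congr rfl fun t _ => by rw [hreal t]]
  have e2 : ∀ t : Fin T, ((T : ℂ)⁻¹ * ∑ l, g l * eT T ((l : ℕ) * (t : ℕ)))
      * eT T (-((k : ℕ) * (t : ℕ) : ℤ))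
      = (T : ℂ)⁻¹ * ∑ l, g l * eT T (((l : ℕ) - (k : ℕ) : ℤ) * (t : ℕ)) := by
    intro t
    rw [mul_assoc, Finset.sum_mul]
    congr 1
    refine Finset.sum_congr rfl fun l _ => ?_
    rw [mul_assoc, ← eT_add]
    congr 2
    ring
  rw [Finset.sum_congr rfl fun t _ => e2 t, ← Finset.mul_sum, Finset.sum_comm]
  have e3 : ∀ l : Fin T, ∑ t : Fin T, g l * eT T (((l : ℕ) - (k : ℕ) : ℤ) * (t : ℕ))
      = g l * (if (T : ℤ) ∣ (((l : ℕ) : ℤ) - ((k : ℕ) : ℤ)) then (T : ℂ) else 0) := by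
    intro l
    rw [← Finset.mul_sum, sum_eT]
  rw [Finset.sum_congr rfl fun l _ => e3 l]
  rw [Finset.sum_eq_single k]
  · rw [if_pos ((fin_dvd_iff_eq k k).mpr rfl)]
    have hT : ((T : ℕ) : ℂ) ≠ 0 := by exact_mod_cast (NeZero.ne T)
    field_simp
  · intro l _ hl
    rw [if_neg (fun h => hl ((fin_dvd_iff_eq l k).mp h))]
    simp
  · intro h
    exact absurd (Finset.mem_univ _) h

end Main

section Slices

open Matrix

variable {T : ℕ} [NeZero T]

lemma dftR_inversion_formula (x : Fin T → ℝ) (t : Fin T) :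
    (T : ℂ)⁻¹ * ∑ k, dftR x k * eT T ((k : ℕ) * (t : ℕ)) = ((x t : ℝ) : ℂ) := by
  have e1 : ∀ k : Fin T, dftR x k * eT T ((k : ℕ) * (t : ℕ))
      = ∑ m, (x m : ℂ) * eT T (((t : ℕ) - (m : ℕ) : ℤ) * (k : ℕ)) := by
    intro k
    rw [dftR_eq, Finset.sum_mul]
    refine Finset.sum_congr rfl fun m _ => ?_
    rw [mul_assoc, ← eT_add]
    congr 2
    ring
  rw [Finset.sum_congr rfl fun k _ => e1 k, Finset.sum_comm]
  have e2 : ∀ m : Fin T, ∑ k : Fin T, (x m : ℂ) * eT T (((t : ℕ) - (m : ℕ) : ℤ) * (k : ℕ))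
      = (x m : ℂ) * (if (T : ℤ) ∣ (((t : ℕ) : ℤ) - ((m : ℕ) : ℤ)) then (T : ℂ) else 0) := by
    intro m
    rw [← Finset.mul_sum, sum_eT]
  rw [Finset.sum_congr rfl fun m _ => e2 m]
  rw [Finset.sum_eq_single t]
  · rw [if_pos ((fin_dvd_iff_eq t t).mpr rfl)]
    have hT : ((T : ℕ) : ℂ) ≠ 0 := by exact_mod_cast (NeZero.ne T)
    field_simp
  · intro m _ hm
    rw [if_neg (fun h => hm (((fin_dvd_iff_eq t m).mp h).symm))]
    simp
  · intro h
    exact absurd (Finset.mem_univ _) h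

lemma dftR_inj {x y : Fin T → ℝ} (h : ∀ k, dftR x k = dftR y k) : x = y := by
  funext t
  have hx := dftR_inversion_formula x t
  have hy := dftR_inversion_formula y t
  rw [Finset.sum_congr rfl fun k _ => by rw [h k]] at hx
  rw [hx] at hy
  exact_mod_cast hy

noncomputable def dftS {a b T : ℕ} (X : Fin a → Fin b → Fin T → ℝ) (k : Fin T) :
    Matrix (Fin a) (Fin b) ℂ :=
  Matrix.of fun i j => dftR (X i j) k

lemma dftS_tprod {a b c : ℕ} (X : Fin a → Fin b → Fin T → ℝ) (Y : Fin b → Fin c → Fin T → ℝ)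
    (k : Fin T) : dftS (tprod X Y) k = dftS X k * dftS Y k := by
  ext i j
  rw [Matrix.mul_apply]
  show dftR (tprod X Y i j) k = _
  have h1 : tprod X Y i j = fun t => ∑ l, cconv (X i l) (Y l j) t := by
    funext t
    rw [tprod]
    exact Finset.sum_apply _ _ _
  rw [h1, dftR_sum]
  exact Finset.sum_congr rfl fun l _ => dftR_cconv (X i l) (Y l j) k

lemma dftS_ttrans {a b : ℕ} (X : Fin a → Fin b → Fin T → ℝ) (k : Fin T) :
    dftS (ttrans X) k = (dftS X k)ᴴ := by
  ext j i
  rw [Matrix.conjTranspose_apply]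
  show dftR (ttrans X j i) k = star (dftR (X i j) k)
  have h1 : ttrans X j i = fun t => X i j (-t) := rfl
  rw [h1, dftR_neg]
  rfl

lemma dftS_tId {n : ℕ} (k : Fin T) : dftS (tId (n := n) (T := T)) k = 1 := by
  ext i j
  show dftR (tId i j) k = (1 : Matrix (Fin n) (Fin n) ℂ) i j
  rw [dftR_tId, Matrix.one_apply]

lemma dftS_symm {a b : ℕ} (X : Fin a → Fin b → Fin T → ℝ) (k : Fin T) :
    dftS X (-k) = (dftS X k).map (starRingEnd ℂ) := by
  ext i j
  show dftR (X i j) (-k) = (starRingEnd ℂ) (dftR (X i j) k)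
  exact dftR_dft_neg (X i j) k

lemma dftS_inj {a b : ℕ} {X Y : Fin a → Fin b → Fin T → ℝ}
    (h : ∀ k, dftS X k = dftS Y k) : X = Y := by
  funext i j
  exact dftR_inj fun k => congrArg (fun Mat => Mat i j) (h k)

end Slices

section SymmFamily

open Matrix
open scoped ComplexConjugate

lemma map_conj_conj {a b : ℕ} (X : Matrix (Fin a) (Fin b) ℂ) :
    (X.map (starRingEnd ℂ)).map (starRingEnd ℂ) = X := by
  ext i j
  simp

lemma conjT_map_conj {a b : ℕ} (X : Matrix (Fin a) (Fin b) ℂ) :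
    (Xᴴ).map (starRingEnd ℂ) = (X.map (starRingEnd ℂ))ᴴ :=
  Matrix.conjTranspose_map _ (fun _ => rfl)

lemma svd_symm_family {T a b : ℕ} [NeZero T] (M : Fin T → Matrix (Fin a) (Fin b) ℂ)
    (hM : ∀ k, M (-k) = (M k).map (starRingEnd ℂ)) :
    ∃ (U : Fin T → Matrix (Fin a) (Fin a) ℂ) (S : Fin T → Matrix (Fin a) (Fin b) ℂ)
      (V : Fin T → Matrix (Fin b) (Fin b) ℂ),
      (∀ k, (U k)ᴴ * U k = 1 ∧ U k * (U k)ᴴ = 1 ∧ (V k)ᴴ * V k = 1 ∧ V k * (V k)ᴴ = 1 ∧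
        (∀ (i : Fin a) (j : Fin b), (i : ℕ) ≠ (j : ℕ) → S k i j = 0) ∧
        M k = U k * S k * (V k)ᴴ) ∧
      (∀ k, U (-k) = (U k).map (starRingEnd ℂ) ∧ S (-k) = (S k).map (starRingEnd ℂ) ∧
        V (-k) = (V k).map (starRingEnd ℂ)) := by
  classical
  have key : ∀ N : Matrix (Fin a) (Fin b) ℂ,
      ∃ (P : Matrix (Fin a) (Fin a) ℂ) (Q : Matrix (Fin a) (Fin b) ℂ)
        (R : Matrix (Fin b) (Fin b) ℂ),
        (Pᴴ * P = 1 ∧ P * Pᴴ = 1 ∧ Rᴴ * R = 1 ∧ R * Rᴴ = 1 ∧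
          (∀ (i : Fin a) (j : Fin b), (i : ℕ) ≠ (j : ℕ) → Q i j = 0) ∧ N = P * Q * Rᴴ) ∧
        (N.map (starRingEnd ℂ) = N →
          (P.map (starRingEnd ℂ) = P ∧ Q.map (starRingEnd ℂ) = Q ∧
            R.map (starRingEnd ℂ) = R)) := by
    intro N
    by_cases hN : N.map (starRingEnd ℂ) = N
    · obtain ⟨Ur, Sr, Vr, h1, h2, h3, h4, h5, h6⟩ := svd_exists (𝕜 := ℝ) (N.map Complex.re)
      have hsemi : Function.Semiconj (⇑Complex.ofRealHom) star star := fun x => by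
        simp [Complex.conj_ofReal]
      have hNr : (N.map Complex.re).map ⇑Complex.ofRealHom = N := by
        ext i j
        have hentry := congrArg (fun Mat : Matrix (Fin a) (Fin b) ℂ => Mat i j) hN
        simp only [Matrix.map_apply] at hentry ⊢
        exact Complex.conj_eq_iff_re.mp hentry
      have hmapone : ∀ {p : ℕ}, (1 : Matrix (Fin p) (Fin p) ℝ).map ⇑Complex.ofRealHom = 1 :=
        fun {p} => Matrix.map_one _ (map_zero _) (map_one _)
      refine ⟨Ur.map ⇑Complex.ofRealHom, Sr.map ⇑Complex.ofRealHom, Vr.map ⇑Complex.ofRealHom,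
        ⟨?_, ?_, ?_, ?_, ?_, ?_⟩, fun _ => ⟨?_, ?_, ?_⟩⟩
      · rw [← Matrix.conjTranspose_map _ hsemi, ← Matrix.map_mul, h1, hmapone]
      · rw [← Matrix.conjTranspose_map _ hsemi, ← Matrix.map_mul, h2, hmapone]
      · rw [← Matrix.conjTranspose_map _ hsemi, ← Matrix.map_mul, h3, hmapone]
      · rw [← Matrix.conjTranspose_map _ hsemi, ← Matrix.map_mul, h4, hmapone]
      · intro i j hij
        simp [Matrix.map_apply, h5 i j hij]
      · rw [← hNr, h6, Matrix.map_mul, Matrix.map_mul, Matrix.conjTranspose_map _ hsemi]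
      · ext i j; simp [Matrix.map_apply, Complex.conj_ofReal]
      · ext i j; simp [Matrix.map_apply, Complex.conj_ofReal]
      · ext i j; simp [Matrix.map_apply, Complex.conj_ofReal]
    · obtain ⟨P, Q, R, h1, h2, h3, h4, h5, h6⟩ := svd_exists (𝕜 := ℂ) N
      exact ⟨P, Q, R, ⟨h1, h2, h3, h4, h5, h6⟩, fun h => absurd h hN⟩
  choose P Q R hfac hreal using key
  refine ⟨fun k => if (k : ℕ) ≤ ((-k : Fin T) : ℕ) then P (M k)
      else (P (M (-k))).map (starRingEnd ℂ),
    fun k => if (k : ℕ) ≤ ((-k : Fin T) : ℕ) then Q (M k)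
      else (Q (M (-k))).map (starRingEnd ℂ),
    fun k => if (k : ℕ) ≤ ((-k : Fin T) : ℕ) then R (M k)
      else (R (M (-k))).map (starRingEnd ℂ), ?_, ?_⟩
  · intro k
    by_cases hk : (k : ℕ) ≤ ((-k : Fin T) : ℕ)
    · simp only [if_pos hk]
      exact hfac (M k)
    · simp only [if_neg hk]
      obtain ⟨g1, g2, g3, g4, g5, g6⟩ := hfac (M (-k))
      have hMk : M k = (M (-k)).map (starRingEnd ℂ) := by
        have h := hM (-k)
        rwa [neg_neg] at h
      refine ⟨?_, ?_, ?_, ?_, ?_, ?_⟩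
      · rw [← conjT_map_conj, ← Matrix.map_mul, g1, Matrix.map_one _ (map_zero _) (map_one _)]
      · rw [← conjT_map_conj, ← Matrix.map_mul, g2, Matrix.map_one _ (map_zero _) (map_one _)]
      · rw [← conjT_map_conj, ← Matrix.map_mul, g3, Matrix.map_one _ (map_zero _) (map_one _)]
      · rw [← conjT_map_conj, ← Matrix.map_mul, g4, Matrix.map_one _ (map_zero _) (map_one _)]
      · intro i j hij
        simp [Matrix.map_apply, g5 i j hij]
      · conv_lhs => rw [hMk, g6]
        rw [Matrix.map_mul, Matrix.map_mul, conjT_map_conj]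
  · intro k
    have comp : ∀ {p q : ℕ} (F : Matrix (Fin a) (Fin b) ℂ → Matrix (Fin p) (Fin q) ℂ),
        ((M k).map (starRingEnd ℂ) = M k → (F (M k)).map (starRingEnd ℂ) = F (M k)) →
        (if ((-k : Fin T) : ℕ) ≤ ((-(-k) : Fin T) : ℕ) then F (M (-k))
          else (F (M (-(-k)))).map (starRingEnd ℂ))
        = ((if (k : ℕ) ≤ ((-k : Fin T) : ℕ) then F (M k)
          else (F (M (-k))).map (starRingEnd ℂ))).map (starRingEnd ℂ) := by
      intro p q F hF
      simp only [neg_neg]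
      by_cases hk : (k : ℕ) ≤ ((-k : Fin T) : ℕ)
      · by_cases hk' : ((-k : Fin T) : ℕ) ≤ (k : ℕ)
        · have hkk : (-k : Fin T) = k := Fin.ext (le_antisymm hk' hk)
          have hMreal : (M k).map (starRingEnd ℂ) = M k := by
            have h := hM k
            rw [hkk] at h
            exact h.symm
          rw [hkk]
          rw [if_pos (le_refl ((k : Fin T) : ℕ))]
          exact (hF hMreal).symm
        · rw [if_neg hk', if_pos hk]
      · have hk' : ((-k : Fin T) : ℕ) ≤ (k : ℕ) := le_of_not_ge hk
        rw [if_pos hk', if_neg hk, map_conj_conj]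
    exact ⟨comp P (fun h => (hreal (M k) h).1), comp Q (fun h => (hreal (M k) h).2.1),
      comp R (fun h => (hreal (M k) h).2.2)⟩

end SymmFamily

end Aux

/-- every real third-order tensor admits a T-SVD `X = U * S * Vᵀ` with
t-orthogonal `U, V` and f-diagonal `S`. -/
theorem tSVD_exists {I1 I2 I3 : ℕ} (X : Fin I1 → Fin I2 → Fin I3 → ℝ) :
    ∃ (U : Fin I1 → Fin I1 → Fin I3 → ℝ) (S : Fin I1 → Fin I2 → Fin I3 → ℝ)
      (V : Fin I2 → Fin I2 → Fin I3 → ℝ),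
      tOrthogonal U ∧ tOrthogonal V ∧ fDiagonal S ∧
        X = tprod (tprod U S) (ttrans V) := by
  classical
  rcases eq_or_ne I3 0 with hT0 | hT0
  · subst hT0
    refine ⟨tId, X, tId, ⟨?_, ?_⟩, ⟨?_, ?_⟩, ?_, ?_⟩
    · funext i j t; exact t.elim0
    · funext i j t; exact t.elim0
    · funext i j t; exact t.elim0
    · funext i j t; exact t.elim0
    · intro t; exact t.elim0
    · funext i j t; exact t.elim0
  · haveI : NeZero I3 := ⟨hT0⟩
    obtain ⟨Uh, Sh, Vh, hfac, hsymm⟩ :=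
      svd_symm_family (fun k => dftS X k) (fun k => dftS_symm X k)
    set U : Fin I1 → Fin I1 → Fin I3 → ℝ := fun i j t =>
      (((I3 : ℕ) : ℂ)⁻¹ * ∑ l, Uh l i j * eT I3 ((l : ℕ) * (t : ℕ))).re with hUdef
    set S : Fin I1 → Fin I2 → Fin I3 → ℝ := fun i j t =>
      (((I3 : ℕ) : ℂ)⁻¹ * ∑ l, Sh l i j * eT I3 ((l : ℕ) * (t : ℕ))).re with hSdef
    set V : Fin I2 → Fin I2 → Fin I3 → ℝ := fun i j t =>
      (((I3 : ℕ) : ℂ)⁻¹ * ∑ l, Vh l i j * eT I3 ((l : ℕ) * (t : ℕ))).re with hVdef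
    have hUd : ∀ k, dftS U k = Uh k := by
      intro k
      ext i j
      show dftR (U i j) k = Uh k i j
      exact dft_inversion (fun l => Uh l i j)
        (fun l => congrArg (fun Mat : Matrix (Fin I1) (Fin I1) ℂ => Mat i j) (hsymm l).1) k
    have hSd : ∀ k, dftS S k = Sh k := by
      intro k
      ext i j
      show dftR (S i j) k = Sh k i j
      exact dft_inversion (fun l => Sh l i j)
        (fun l => congrArg (fun Mat : Matrix (Fin I1) (Fin I2) ℂ => Mat i j) (hsymm l).2.1) k
    have hVd : ∀ k, dftS V k = Vh k := by
      intro k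
      ext i j
      show dftR (V i j) k = Vh k i j
      exact dft_inversion (fun l => Vh l i j)
        (fun l => congrArg (fun Mat : Matrix (Fin I2) (Fin I2) ℂ => Mat i j) (hsymm l).2.2) k
    refine ⟨U, S, V, ⟨?_, ?_⟩, ⟨?_, ?_⟩, ?_, ?_⟩
    · refine dftS_inj fun k => ?_
      rw [dftS_tprod, dftS_ttrans, hUd, dftS_tId]
      exact (hfac k).1
    · refine dftS_inj fun k => ?_
      rw [dftS_tprod, dftS_ttrans, hUd, dftS_tId]
      exact (hfac k).2.1
    · refine dftS_inj fun k => ?_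
      rw [dftS_tprod, dftS_ttrans, hVd, dftS_tId]
      exact (hfac k).2.2.1
    · refine dftS_inj fun k => ?_
      rw [dftS_tprod, dftS_ttrans, hVd, dftS_tId]
      exact (hfac k).2.2.2.1
    · intro t i j hij
      have h := congrArg (fun Mat : Matrix (Fin I1) (Fin I2) ℂ => Mat i j) (hSd t)
      show dftR (S i j) t = 0
      calc dftR (S i j) t = Sh t i j := h
        _ = 0 := (hfac t).2.2.2.2.1 i j hij
    · refine dftS_inj fun k => ?_
      rw [dftS_tprod, dftS_tprod, dftS_ttrans, hUd, hSd, hVd]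
      exact (hfac k).2.2.2.2.2

end TTT
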